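/- If a binary relation R on processes is transitive, then its lifting R̂ to probability distributions is also transitive. -/

import Mathlib

open BigOperators Finsupp

/-- Finitely supported (sub)distributions on `α`. -/
abbrev PDist (α : Type) := α →₀ NNReal

/-- Point distribution. -/
noncomputable def delta {α : Type} (a : α) : PDist α := Finsupp.single a 1

/-- Lifting of a relation on processes to probability distributions:
`(Δ, Θ) ∈ R̂` iff `Δ = Σ_i p_i·δ(P_i)`, `Θ = Σ_i p_i·δ(Q_i)` for a finite index
set with `Σ p_i = 1` and `R (P i) (Q i)` for all `i`. -/
def Lift {α : Type} (R : α → α → Prop) (Δ Θ : PDist α) : Prop :=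
  ∃ (n : ℕ) (p : Fin n → NNReal) (P Q : Fin n → α),
    (∑ i, p i) = 1 ∧
    Δ = ∑ i, p i • delta (P i) ∧
    Θ = ∑ i, p i • delta (Q i) ∧
    ∀ i, R (P i) (Q i)

open Classical in
lemma sum_delta_apply {α : Type} {k : ℕ} (c : Fin k → NNReal) (F : Fin k → α) (a : α) :
    (∑ i, c i • delta (F i)) a = ∑ i, (if F i = a then c i else 0) := by
  rw [Finsupp.finset_sum_apply]
  refine Finset.sum_congr rfl fun i _ => ?_
  rw [Finsupp.smul_apply, delta, Finsupp.single_apply]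
  split <;> simp

/-- Preservation of transitivity: if `R` is transitive then so is its lifting
`R̂` to probability distributions. -/
theorem lift_transitive {α : Type} (R : α → α → Prop) (hR : Transitive R) :
    Transitive (Lift R) := by
  classical
  rintro Δ Θ Ξ ⟨n, p, P, Q, hp, hΔ, hΘ, hPQ⟩ ⟨m, q, S, T, hq, hΘ', hΞ, hST⟩
  have hΘa : ∀ a, Θ a = ∑ i, (if Q i = a then p i else 0) := fun a => by
    rw [hΘ, sum_delta_apply]
  have hΘa' : ∀ a, Θ a = ∑ j, (if S j = a then q j else 0) := fun a => by
    rw [hΘ', sum_delta_apply]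
  set r : Fin n × Fin m → NNReal := fun ij =>
    if Q ij.1 = S ij.2 then p ij.1 * q ij.2 / Θ (Q ij.1) else 0 with hr
  have hz : ∀ i, Θ (Q i) = 0 → p i = 0 := by
    intro i h
    rw [hΘa (Q i)] at h
    have := (Finset.sum_eq_zero_iff).mp h i (Finset.mem_univ i)
    simpa using this
  have hrow : ∀ i, (∑ j, r (i, j)) = p i := by
    intro i
    by_cases h0 : Θ (Q i) = 0
    · rw [hz i h0]
      refine Finset.sum_eq_zero fun j _ => ?_
      simp only [hr]
      split
      · rw [hz i h0]; simp
      · rfl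
    · have : (∑ j, r (i, j)) = (∑ j, (if S j = Q i then q j else 0)) * (p i / Θ (Q i)) := by
        rw [Finset.sum_mul]
        refine Finset.sum_congr rfl fun j _ => ?_
        simp only [hr]
        rcases eq_or_ne (Q i) (S j) with h | h
        · rw [if_pos h, if_pos h.symm, h]
          simp only [div_eq_mul_inv]; ring
        · rw [if_neg h, if_neg (fun hh => h hh.symm), zero_mul]
      rw [this, ← hΘa' (Q i), mul_div_assoc', mul_comm, mul_div_assoc, div_self h0, mul_one]
  have hcol : ∀ j, (∑ i, r (i, j)) = q j := by
    intro j
    by_cases h0 : Θ (S j) = 0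
    · have hqj : q j = 0 := by
        rw [hΘa' (S j)] at h0
        have := (Finset.sum_eq_zero_iff).mp h0 j (Finset.mem_univ j)
        simpa using this
      rw [hqj]
      refine Finset.sum_eq_zero fun i _ => ?_
      simp only [hr]
      split
      · rw [hqj]; simp
      · rfl
    · have : (∑ i, r (i, j)) = (∑ i, (if Q i = S j then p i else 0)) * (q j / Θ (S j)) := by
        rw [Finset.sum_mul]
        refine Finset.sum_congr rfl fun i _ => ?_
        simp only [hr]
        rcases eq_or_ne (Q i) (S j) with h | h
        · rw [if_pos h, if_pos h, h]
          simp only [div_eq_mul_inv]; ring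
        · rw [if_neg h, if_neg h, zero_mul]
      rw [this, ← hΘa (S j), mul_div_assoc', mul_comm, mul_div_assoc, div_self h0, mul_one]
  refine ⟨n * m, fun k => r (finProdFinEquiv.symm k),
    fun k => P (finProdFinEquiv.symm k).1,
    fun k => if Q (finProdFinEquiv.symm k).1 = S (finProdFinEquiv.symm k).2
      then T (finProdFinEquiv.symm k).2 else Q (finProdFinEquiv.symm k).1,
    ?_, ?_, ?_, ?_⟩
  · rw [Fintype.sum_equiv finProdFinEquiv.symm _ (fun ij => r ij) (fun k => rfl),
      Fintype.sum_prod_type]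
    simp only [hrow, hp]
  · rw [Fintype.sum_equiv finProdFinEquiv.symm _ (fun ij => r ij • delta (P ij.1)) (fun k => rfl),
      Fintype.sum_prod_type]
    rw [hΔ]
    refine Finset.sum_congr rfl fun i _ => ?_
    show p i • delta (P i) = ∑ y, r (i, y) • delta (P i)
    rw [← Finset.sum_smul, hrow]
  · rw [Fintype.sum_equiv finProdFinEquiv.symm _
      (fun ij => r ij • delta (if Q ij.1 = S ij.2 then T ij.2 else Q ij.1)) (fun k => rfl)]
    have : (∑ ij : Fin n × Fin m, r ij • delta (if Q ij.1 = S ij.2 then T ij.2 else Q ij.1))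
        = ∑ ij : Fin n × Fin m, r ij • delta (T ij.2) := by
      refine Finset.sum_congr rfl fun ij _ => ?_
      by_cases h : Q ij.1 = S ij.2
      · rw [if_pos h]
      · have : r ij = 0 := by simp only [hr]; rw [if_neg h]
        rw [this, zero_smul, zero_smul]
    rw [this, Fintype.sum_prod_type_right, hΞ]
    refine Finset.sum_congr rfl fun j _ => ?_
    show q j • delta (T j) = ∑ x, r (x, j) • delta (T j)
    rw [← Finset.sum_smul, hcol]
  · intro k
    show R (P (finProdFinEquiv.symm k).1) (if Q (finProdFinEquiv.symm k).1 = S (finProdFinEquiv.symm k).2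
      then T (finProdFinEquiv.symm k).2 else Q (finProdFinEquiv.symm k).1)
    set ij := finProdFinEquiv.symm k
    by_cases h : Q ij.1 = S ij.2
    · simp only [if_pos h]
      exact hR (h ▸ hPQ ij.1) (hST ij.2)
    · simp only [if_neg h]
      exact hPQ ij.1
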